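/- arXiv:0706.3539 — 2 statements merged into one kernel-verified Lean document; each statement's English description precedes it below -/
import Mathlib

section
/- For integers t ≥ 1 and k with 0 ≤ k ≤ t, one has p(2t+2, k, t) = b(t,k) · c(t,k), where b(t,k) = 2^k · C(t,k) / C(2t,k) and c(t,k) = (2t − k + 2)(2t + 1 − k) / ((2t − 2k + 2)(2t + 1)). -/
/-- Integer binomial coefficient: `intChoose a b` is zero unless `0 ≤ b ≤ a`. -/
def intChoose (a b : ℤ) : ℤ :=
  if 0 ≤ b ∧ b ≤ a then (a.toNat.choose b.toNat : ℤ) else 0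

/-- `p(n,k,t) = (∑_{i=0}^t (-1)^i C(t,i) C(n-1-2i, k-2i)) / C(n-1,k)`. -/
def pFun (n k t : ℕ) : ℚ :=
  (∑ i ∈ Finset.range (t + 1),
      (-1) ^ i * (intChoose t i : ℚ) * (intChoose ((n : ℤ) - 1 - 2 * i) ((k : ℤ) - 2 * i) : ℚ))
    / ((n - 1).choose k : ℚ)


open Polynomial Finset

lemma polyid (t : ℕ) :
    ∑ i ∈ range (t+1), Polynomial.C ((-1:ℚ)^i * (t.choose i : ℚ)) *
      ((X + 1)^(2*(t-i)+1) * X^(2*i)) = (X + 1) * (2*X + 1 : ℚ[X])^t := by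
  have h : (2*X + 1 : ℚ[X]) = -(X^2) + (X+1)^2 := by ring
  rw [h, add_pow, Finset.mul_sum]
  refine Finset.sum_congr rfl fun i hi => ?_
  have hit : i ≤ t := Nat.lt_succ_iff.mp (Finset.mem_range.mp hi)
  rw [show 2*(t-i)+1 = 2*(t-i)+1 from rfl]
  have : ((X:ℚ[X]) + 1)^(2*(t-i)+1) = ((X+1)^2)^(t-i) * (X+1) := by
    rw [← pow_mul, pow_succ]
  rw [this]
  simp only [map_mul, map_pow, map_neg, map_one, Polynomial.C_eq_natCast]
  ring


lemma coeff_pow2 (t k : ℕ) : ((2*X + 1 : ℚ[X])^t).coeff k = 2^k * t.choose k := by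
  have h : (2*X + 1 : ℚ[X]) = X * Polynomial.C 2 + 1 := by
    rw [show (2:ℚ[X]) = Polynomial.C 2 from (map_ofNat Polynomial.C 2).symm]; ring
  rw [h, add_pow, Polynomial.finset_sum_coeff]
  have key : ∀ i ∈ range (t+1), ((X * Polynomial.C (2:ℚ))^i * 1^(t-i) * (t.choose i : ℚ[X])).coeff k
      = if k = i then (2^k * t.choose k : ℚ) else 0 := by
    intro i hi
    rw [mul_pow, one_pow, mul_one]
    rw [show ((t.choose i : ℚ[X])) = Polynomial.C (t.choose i : ℚ) by simp]
    rw [← Polynomial.C_pow, mul_assoc, ← Polynomial.C_mul, mul_comm ((X:ℚ[X])^i),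
      Polynomial.coeff_C_mul, Polynomial.coeff_X_pow]
    split_ifs with hki
    · subst hki; ring
    · ring
  rw [Finset.sum_congr rfl key, Finset.sum_ite_eq]
  split_ifs with h
  · rfl
  · simp only [Finset.mem_range, Nat.lt_succ_iff, not_le] at h
    simp [Nat.choose_eq_zero_of_lt h]

lemma sum_eq_coeff (t k : ℕ) :
    ∑ i ∈ range (t+1), (-1:ℚ)^i * (t.choose i : ℚ) *
        (if 2*i ≤ k then (((2*(t-i)+1).choose (k-2*i) : ℚ)) else 0)
      = ((X + 1) * (2*X + 1 : ℚ[X])^t).coeff k := by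
  rw [← polyid, Polynomial.finset_sum_coeff]
  refine Finset.sum_congr rfl fun i hi => ?_
  rw [Polynomial.coeff_C_mul, Polynomial.coeff_mul_X_pow', Polynomial.coeff_X_add_one_pow]

lemma intChoose_coe (a b : ℕ) : intChoose a b = a.choose b := by
  unfold intChoose
  rcases le_or_gt b a with hba | hba
  · rw [if_pos ⟨Int.natCast_nonneg _, by exact_mod_cast hba⟩]; simp
  · rw [if_neg (by push_neg; intro _; exact_mod_cast hba), Nat.choose_eq_zero_of_lt hba]
    simp

lemma coeff_val (t j : ℕ) :
    ((X + 1) * (2*X + 1 : ℚ[X])^t).coeff (j+1)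
      = (2^(j+1) * t.choose (j+1) + 2^j * t.choose j : ℚ) := by
  rw [add_mul, one_mul, Polynomial.coeff_add, Polynomial.coeff_X_mul, coeff_pow2, coeff_pow2]
  ring

lemma coeff_val0 (t : ℕ) : ((X + 1) * (2*X + 1 : ℚ[X])^t).coeff 0 = 1 := by
  rw [Polynomial.mul_coeff_zero, coeff_pow2]
  simp

theorem stmt_13 (t k : ℕ) (ht : 1 ≤ t) (hk : k ≤ t) :
    pFun (2 * t + 2) k t =
      (2 ^ k * (t.choose k : ℚ) / ((2 * t).choose k : ℚ)) *
        ((2 * (t : ℚ) - k + 2) * (2 * (t : ℚ) + 1 - k) /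
          ((2 * (t : ℚ) - 2 * k + 2) * (2 * (t : ℚ) + 1))) := by
  unfold pFun
  have hnum : (∑ i ∈ Finset.range (t + 1),
      (-1:ℚ) ^ i * (intChoose t i : ℚ) *
        (intChoose (((2*t+2 : ℕ) : ℤ) - 1 - 2 * i) ((k : ℤ) - 2 * i) : ℚ))
      = ∑ i ∈ range (t+1), (-1:ℚ)^i * (t.choose i : ℚ) *
          (if 2*i ≤ k then (((2*(t-i)+1).choose (k-2*i) : ℚ)) else 0) := by
    refine Finset.sum_congr rfl fun i hi => ?_
    have hit : i ≤ t := Nat.lt_succ_iff.mp (Finset.mem_range.mp hi)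
    rw [intChoose_coe]
    congr 1
    by_cases h2 : 2*i ≤ k
    · rw [if_pos h2]
      have e1 : (((2*t+2 : ℕ)) : ℤ) - 1 - 2 * i = ((2*(t-i)+1 : ℕ) : ℤ) := by
        push_cast [Nat.cast_sub hit]; ring
      have e2 : ((k : ℤ)) - 2 * i = ((k - 2*i : ℕ) : ℤ) := by
        push_cast [Nat.cast_sub h2]; ring
      rw [e1, e2, intChoose_coe]; norm_cast
    · rw [if_neg h2]
      have : intChoose (((2*t+2 : ℕ)) - 1 - 2 * i) ((k : ℤ) - 2 * i) = 0 := by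
        unfold intChoose
        rw [if_neg]
        push_neg
        intro h
        exfalso
        have : (k : ℤ) - 2*i < 0 := by
          have : (k:ℤ) < 2*i := by exact_mod_cast Nat.lt_of_not_le h2 |>.trans_le le_rfl
          omega
        omega
      rw [this]; simp
  rw [hnum, sum_eq_coeff]
  have hden : (2*t+2-1).choose k = (2*t+1).choose k := by norm_num
  rw [hden]
  rcases Nat.eq_zero_or_pos k with rfl | hkpos
  · rw [coeff_val0]
    have h1 : (2*(t:ℚ)+1) ≠ 0 := by positivity
    have h2 : (2*(t:ℚ)-0+2) ≠ 0 := by norm_num; positivity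
    simp only [Nat.choose_zero_right, Nat.cast_one, pow_zero, Nat.cast_zero]
    field_simp
    ring
  · obtain ⟨j, rfl⟩ : ∃ j, k = j + 1 := ⟨k-1, by omega⟩
    rw [coeff_val]
    have hkt : j + 1 ≤ 2*t + 1 := by omega
    have hA : ((2*t+1).choose (j+1) : ℚ) * (2*(t:ℚ)+1-(j+1)) = (2*(t:ℚ)+1) * ((2*t).choose (j+1) : ℚ) := by
      have := Nat.choose_mul_succ_eq (2*t) (j+1)
      have hcast : (((2*t).choose (j+1) * (2*t+1) : ℕ) : ℚ) = (((2*t+1).choose (j+1) * (2*t+1-(j+1)) : ℕ) : ℚ) := by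
        exact_mod_cast congrArg (Nat.cast : ℕ → ℚ) this
      push_cast [Nat.cast_sub (show j ≤ 2*t by omega)] at hcast
      linarith [hcast]
    have hB : (t.choose j : ℚ) * ((t:ℚ) - j) = ((j:ℚ)+1) * (t.choose (j+1) : ℚ) := by
      have := Nat.choose_succ_right_eq t j
      have hjt : j ≤ t := by omega
      have hcast : ((t.choose (j+1) * (j+1) : ℕ) : ℚ) = ((t.choose j * (t - j) : ℕ) : ℚ) := by
        exact_mod_cast congrArg (Nat.cast : ℕ → ℚ) this
      push_cast [Nat.cast_sub hjt] at hcast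
      linarith [hcast]
    have n1 : ((2*t+1).choose (j+1) : ℚ) ≠ 0 := Nat.cast_ne_zero.mpr (Nat.choose_pos hkt).ne'
    have n2 : ((2*t).choose (j+1) : ℚ) ≠ 0 := Nat.cast_ne_zero.mpr (Nat.choose_pos (by omega : j+1 ≤ 2*t)).ne'
    have n3 : (2*(t:ℚ)+1) ≠ 0 := by positivity
    have n4 : (2*(t:ℚ) - 2*(((j:ℚ))+1) + 2) ≠ 0 := by
      have : ((j:ℚ)+1) ≤ t := by exact_mod_cast hk
      nlinarith
    push_cast
    rw [div_mul_div_comm, div_eq_div_iff (by positivity) (by positivity)]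
    linear_combination (-(2:ℚ)^(j+1) * (t.choose (j+1):ℚ) * (2*(t:ℚ)-((j:ℚ)+1)+2)) * hA + ((2:ℚ)^(j+1) * (2*(t:ℚ)+1) * ((2*t).choose (j+1):ℚ)) * hB
end

section
/- Fix a real constant c > 0. For t ≥ 1 set n = 2t + 2 and k(t) = ⌊c·√n⌋. Then p(n, k(t), t) → exp(−c²/2) as t → ∞. In particular, for n a power of two, p(n, ⌊c·√n⌋, (n−2)/2) does not tend to 1 as n → ∞. -/
open Finset Filter Real

lemma ic_ofNat (a b : ℕ) : intChoose a b = (a.choose b : ℤ) := by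
  unfold intChoose
  split
  · simp
  · rename_i h
    push_neg at h
    have hba : (a:ℤ) < b := h (by positivity)
    rw [Nat.choose_eq_zero_of_lt (by exact_mod_cast hba)]
    simp

lemma ic_neg {a b : ℤ} (hb : b < 0) : intChoose a b = 0 := by
  unfold intChoose; rw [if_neg]; omega

lemma ic_pascal (a b : ℤ) (ha : 0 ≤ a) :
    intChoose (a + 1) b = intChoose a b + intChoose a (b - 1) := by
  obtain ⟨m, rfl⟩ := Int.eq_ofNat_of_zero_le ha
  rcases lt_or_ge b 0 with hb | hb
  · rw [ic_neg hb, ic_neg hb, ic_neg (by omega)]; ring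
  · obtain ⟨n, rfl⟩ := Int.eq_ofNat_of_zero_le hb
    cases n with
    | zero =>
      have h1 : ((m:ℤ) + 1) = ((m + 1 : ℕ) : ℤ) := by push_cast; ring
      rw [h1, ic_ofNat, ic_ofNat, ic_neg (by norm_num)]
      simp
    | succ d =>
      have h1 : ((m:ℤ) + 1) = ((m + 1 : ℕ) : ℤ) := by push_cast; ring
      have h2 : ((d + 1 : ℕ) : ℤ) - 1 = ((d : ℕ) : ℤ) := by push_cast; ring
      rw [h1, h2, ic_ofNat, ic_ofNat, ic_ofNat, Nat.choose_succ_succ]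
      push_cast; ring

def Ssum (t : ℕ) (k : ℤ) : ℤ :=
  ∑ i ∈ Finset.range (t + 1),
    (-1) ^ i * (t.choose i : ℤ) * intChoose (2 * t + 1 - 2 * i) (k - 2 * i)

lemma Ssum_rec (t : ℕ) (k : ℤ) :
    Ssum (t + 1) k = Ssum t k + 2 * Ssum t (k - 1) := by
  set v : ℕ → ℤ := fun i =>
    (-1) ^ i * (t.choose i : ℤ) * intChoose (2 * (t:ℤ) + 3 - 2 * i) (k - 2 * i) with hv
  set W : ℤ := ∑ j ∈ Finset.range (t + 1),
      (-1:ℤ) ^ (j+1) * ((t.choose j : ℤ) + (t.choose (j+1) : ℤ))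
        * intChoose (2 * t + 1 - 2 * j) (k - 2 - 2 * j) with hW
  set T : ℤ := ∑ j ∈ Finset.range (t + 1),
      (-1:ℤ) ^ j * (t.choose (j+1) : ℤ) * intChoose (2 * t + 1 - 2 * j) (k - 2 - 2 * j) with hT
  have key : ∀ i ∈ Finset.range (t + 1), v i
      = ((-1) ^ i * (t.choose i : ℤ) * intChoose (2 * t + 1 - 2 * i) (k - 2 * i))
        + 2 * ((-1) ^ i * (t.choose i : ℤ) * intChoose (2 * t + 1 - 2 * i) ((k-1) - 2 * i))
        + ((-1) ^ i * (t.choose i : ℤ) * intChoose (2 * t + 1 - 2 * i) ((k-2) - 2 * i)) := by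
    intro i hi
    simp only [Finset.mem_range] at hi
    have hi' : (i : ℤ) ≤ t := by exact_mod_cast Nat.lt_succ_iff.mp hi
    rw [hv]
    simp only
    rw [show 2 * (t:ℤ) + 3 - 2 * i = (2 * (t:ℤ) + 2 - 2 * i) + 1 by ring,
      ic_pascal _ _ (by omega),
      show 2 * (t:ℤ) + 2 - 2 * i = (2 * (t:ℤ) + 1 - 2 * i) + 1 by ring,
      ic_pascal _ _ (by omega), ic_pascal _ _ (by omega),
      show k - 2 * (i:ℤ) - 1 = (k - 1) - 2 * i by ring,
      show k - 1 - 2 * (i:ℤ) - 1 = (k - 2) - 2 * i by ring]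
    ring
  have hA : ∑ i ∈ Finset.range (t + 1), v i
      = Ssum t k + 2 * Ssum t (k - 1) + Ssum t (k - 2) := by
    unfold Ssum
    rw [Finset.mul_sum, ← Finset.sum_add_distrib, ← Finset.sum_add_distrib]
    exact Finset.sum_congr rfl key
  have hA' : ∑ i ∈ Finset.range (t + 2), v i = ∑ i ∈ Finset.range (t + 1), v i := by
    rw [Finset.sum_range_succ]
    simp [hv, Nat.choose_succ_self]
  have expand : Ssum (t+1) k = v 0 + W := by
    unfold Ssum
    rw [Finset.sum_range_succ']
    rw [add_comm]
    congr 1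
    · rw [hv]; simp only; push_cast
      norm_num
      rw [show 2 * ((t:ℤ)+1) + 1 = 2*(t:ℤ)+3 by ring]
    · rw [hW]
      refine Finset.sum_congr rfl ?_
      intro j hj
      rw [Nat.choose_succ_succ]
      push_cast
      rw [show 2*((t:ℤ)+1)+1-2*((j:ℤ)+1) = 2*(t:ℤ)+1-2*(j:ℤ) by ring,
        show k-2*((j:ℤ)+1) = k-2-2*(j:ℤ) by ring]
  have h2 : W + Ssum t (k-2) + T = 0 := by
    rw [hW, hT]
    unfold Ssum
    rw [← Finset.sum_add_distrib, ← Finset.sum_add_distrib]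
    apply Finset.sum_eq_zero
    intro j hj
    ring_nf
  have h3 : T = v 0 - ∑ i ∈ Finset.range (t + 2), v i := by
    rw [Finset.sum_range_succ']
    have : ∀ j ∈ Finset.range (t+1), v (j+1)
        = -((-1:ℤ) ^ j * (t.choose (j+1) : ℤ) * intChoose (2 * t + 1 - 2 * j) (k - 2 - 2 * j)) := by
      intro j hj
      rw [hv]
      simp only
      push_cast
      rw [show 2*(t:ℤ)+3-2*((j:ℤ)+1) = 2*(t:ℤ)+1-2*(j:ℤ) by push_cast; ring,
        show k-2*((j:ℤ)+1) = k-2-2*(j:ℤ) by push_cast; ring]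
      ring
    rw [Finset.sum_congr rfl this, hT]
    rw [Finset.sum_neg_distrib]
    ring
  rw [expand]
  linarith [hA, hA', h2, h3]

lemma ic_one (b : ℤ) : intChoose 1 b = if b = 0 ∨ b = 1 then 1 else 0 := by
  unfold intChoose
  split_ifs with h1 h2 h3
  · rcases h2 with rfl | rfl <;> simp
  · exfalso; omega
  · omega
  · rfl

lemma ic_zero (b : ℤ) : intChoose 0 b = if b = 0 then 1 else 0 := by
  unfold intChoose
  split_ifs with h1 h2 h3
  · subst h2; simp
  · omega
  · omega
  · rfl

lemma Ssum_eq (t : ℕ) (k : ℤ) :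
    2 * Ssum t k = 2 ^ k.toNat * (2 * intChoose t k + intChoose t (k - 1)) := by
  induction t generalizing k with
  | zero =>
    have h : Ssum 0 k = intChoose 1 k := by
      unfold Ssum; simp
    rw [h, ic_one]
    rcases lt_trichotomy k 0 with hk | hk | hk
    · rw [ic_neg hk, ic_neg (show k - 1 < 0 by omega), if_neg (show ¬(k = 0 ∨ k = 1) by omega)]
      ring
    · subst hk
      norm_num [ic_zero, ic_neg]
    · rcases eq_or_lt_of_le (show (1:ℤ) ≤ k by omega) with hk1 | hk1
      · rw [← hk1]
        norm_num [ic_zero]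
      · simp only [Nat.cast_zero]
        rw [ic_zero, ic_zero, if_neg (show ¬(k = 0 ∨ k = 1) by omega),
          if_neg (show k ≠ 0 by omega), if_neg (show k - 1 ≠ 0 by omega)]
        ring
  | succ t ih =>
    rw [Ssum_rec]
    have hps : ∀ b : ℤ, intChoose ((t+1 : ℕ)) b = intChoose t b + intChoose t (b-1) := by
      intro b
      rw [show (((t+1:ℕ)):ℤ) = (t:ℤ) + 1 from by push_cast; ring]
      exact ic_pascal _ _ (Int.natCast_nonneg t)
    rw [hps, hps]
    rcases lt_trichotomy k 0 with hk | hk | hk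
    · have h1 := ih k
      have h2 := ih (k-1)
      have z1 : intChoose (t:ℤ) k = 0 := ic_neg hk
      have z2 : intChoose (t:ℤ) (k-1) = 0 := ic_neg (by omega)
      have z3 : intChoose (t:ℤ) (k-1-1) = 0 := ic_neg (by omega)
      rw [z1, z2] at h1
      rw [z2, z3] at h2
      rw [z1, z2, z3]
      norm_num at h1 h2 ⊢
      linarith
    · subst hk
      have h1 := ih 0
      have h2 := ih (0-1)
      have z1 : intChoose (t:ℤ) ((0:ℤ)-1) = 0 := ic_neg (by norm_num)
      have z2 : intChoose (t:ℤ) ((0:ℤ)-1-1) = 0 := ic_neg (by norm_num)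
      rw [z1] at h1
      rw [z1, z2] at h2
      rw [z1, z2]
      norm_num at h1 h2 ⊢
      linarith
    · obtain ⟨m, rfl⟩ : ∃ m : ℕ, k = (m : ℤ) + 1 := ⟨(k-1).toNat, by omega⟩
      have h1 := ih ((m:ℤ)+1)
      have h2 := ih ((m:ℤ)+1-1)
      have e1 : ((m:ℤ)+1).toNat = m + 1 := by omega
      have e2 : ((m:ℤ)).toNat = m := by omega
      rw [show ((m:ℤ)+1-1) = (m:ℤ) from by ring] at *
      simp only [e1, e2, pow_succ] at *
      linarith

lemma pFun_eq (t k : ℕ) (hk : 1 ≤ k) :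
    pFun (2 * t + 2) k t
      = ((2 ^ k * t.choose k + 2 ^ (k - 1) * t.choose (k - 1) : ℕ) : ℚ)
        / (((2 * t + 1).choose k : ℕ) : ℚ) := by
  have hnum : (∑ i ∈ Finset.range (t + 1),
      (-1:ℚ) ^ i * (intChoose t i : ℚ)
        * (intChoose (((2*t+2 : ℕ) : ℤ) - 1 - 2 * i) ((k : ℤ) - 2 * i) : ℚ))
      = ((Ssum t k : ℤ) : ℚ) := by
    unfold Ssum
    push_cast
    refine Finset.sum_congr rfl ?_
    intro i hi
    rw [ic_ofNat]
    push_cast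
    rw [show (2*(t:ℤ)+2) - 1 - 2 * (i:ℤ) = 2 * t + 1 - 2 * i from by ring]
  have hS : Ssum t k = (2 ^ k * t.choose k + 2 ^ (k - 1) * t.choose (k - 1) : ℕ) := by
    have h := Ssum_eq t k
    rw [Int.toNat_natCast, ic_ofNat] at h
    rw [show ((k:ℤ) - 1) = ((k - 1 : ℕ) : ℤ) from by omega, ic_ofNat] at h
    have h2k : (2:ℤ) ^ k = 2 * 2 ^ (k - 1) := by
      rw [← pow_succ']
      congr 1
      omega
    apply mul_left_cancel₀ (show (2:ℤ) ≠ 0 by norm_num)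
    rw [h]
    push_cast
    rw [h2k]
    ring
  unfold pFun
  rw [hnum, hS]
  norm_num

lemma prod_id (t : ℕ) : ∀ k : ℕ, k ≤ t →
    (((2*t+1).choose k : ℝ)) * ∏ j ∈ range k, (2*(t:ℝ) - 2*j)
      = (2:ℝ)^k * (t.choose k : ℝ) * ∏ j ∈ range k, (2*(t:ℝ) + 1 - j) := by
  intro k
  induction k with
  | zero => simp
  | succ k ih =>
    intro hk1
    have hk : k ≤ t := Nat.le_of_succ_le hk1
    have IH := ih hk
    have hc1 : ((2*t+1).choose (k+1) : ℝ) * ((k:ℝ)+1)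
        = ((2*t+1).choose k : ℝ) * (2*(t:ℝ)+1-k) := by
      have := Nat.choose_succ_right_eq (2*t+1) k
      have hcast : ((2*t+1-k : ℕ) : ℝ) = 2*(t:ℝ)+1-k := by
        push_cast [Nat.cast_sub (by omega : k ≤ 2*t+1)]; ring
      calc ((2*t+1).choose (k+1) : ℝ) * ((k:ℝ)+1)
          = (((2*t+1).choose (k+1) * (k+1) : ℕ) : ℝ) := by push_cast; ring
        _ = (((2*t+1).choose k * (2*t+1-k) : ℕ) : ℝ) := by rw [this]
        _ = ((2*t+1).choose k : ℝ) * (2*(t:ℝ)+1-k) := by push_cast [Nat.cast_sub (by omega : k ≤ 2*t+1)]; ring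
    have hc2 : (t.choose (k+1) : ℝ) * ((k:ℝ)+1)
        = (t.choose k : ℝ) * ((t:ℝ)-k) := by
      have := Nat.choose_succ_right_eq t k
      calc (t.choose (k+1) : ℝ) * ((k:ℝ)+1)
          = ((t.choose (k+1) * (k+1) : ℕ) : ℝ) := by push_cast; ring
        _ = ((t.choose k * (t-k) : ℕ) : ℝ) := by rw [this]
        _ = (t.choose k : ℝ) * ((t:ℝ)-k) := by push_cast [Nat.cast_sub hk]; ring
    rw [prod_range_succ, prod_range_succ]
    apply mul_right_cancel₀ (show ((k:ℝ)+1) ≠ 0 by positivity)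
    linear_combination (∏ j ∈ range k, (2*(t:ℝ)-2*j)) * (2*(t:ℝ)-2*k) * hc1
      - 2*(2:ℝ)^k * (∏ j ∈ range k, (2*(t:ℝ)+1-j)) * (2*(t:ℝ)+1-k) * hc2
      + (2*(t:ℝ)-2*k)*(2*(t:ℝ)+1-k) * IH

lemma recast (t k : ℕ) (hk1 : 1 ≤ k) (hkt : k ≤ t) :
    ((2 ^ k * t.choose k + 2 ^ (k - 1) * t.choose (k - 1) : ℕ) : ℝ)
        / (((2 * t + 1).choose k : ℕ) : ℝ)
      = (∏ j ∈ range k, ((2*(t:ℝ) - 2*j) / (2*(t:ℝ) + 1 - j)))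
        * ((2*(t:ℝ) + 2 - k) / (2*(t:ℝ) + 2 - 2*k)) := by
  have hPd_pos : ∀ j ∈ range k, (0:ℝ) < 2*(t:ℝ) + 1 - j := by
    intro j hj
    simp only [mem_range] at hj
    have : (j:ℝ) < k := by exact_mod_cast hj
    have : (k:ℝ) ≤ t := by exact_mod_cast hkt
    linarith
  have hPd : (0:ℝ) < ∏ j ∈ range k, (2*(t:ℝ) + 1 - j) := prod_pos hPd_pos
  have hC : (0:ℝ) < (((2*t+1).choose k : ℕ) : ℝ) := by
    have : 0 < (2*t+1).choose k := Nat.choose_pos (by omega)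
    exact_mod_cast this
  have hq : (∏ j ∈ range k, ((2*(t:ℝ) - 2*j) / (2*(t:ℝ) + 1 - j)))
      = (∏ j ∈ range k, (2*(t:ℝ) - 2*j)) / (∏ j ∈ range k, (2*(t:ℝ) + 1 - j)) :=
    prod_div_distrib _ _
  have hB : (t.choose k : ℝ) * k = (t.choose (k-1) : ℝ) * ((t:ℝ) + 1 - k) := by
    obtain ⟨m, rfl⟩ : ∃ m, k = m + 1 := ⟨k - 1, by omega⟩
    have hnat : t.choose (m+1) * (m+1) = t.choose m * (t - m) := Nat.choose_succ_right_eq t m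
    have hr : (t.choose (m+1) : ℝ) * ((m:ℝ)+1) = (t.choose m : ℝ) * ((t:ℝ) - m) := by
      have := congrArg (fun n : ℕ => (n : ℝ)) hnat
      push_cast [Nat.cast_sub (show m ≤ t by omega)] at this
      linarith [this]
    simp only [Nat.add_sub_cancel]
    push_cast
    linarith [hr]
  have h2k : (2:ℝ)^k = 2 * 2^(k-1) := by
    rw [← pow_succ']
    congr 1
    omega
  have hid := prod_id t k hkt
  have hden2 : (2*(t:ℝ) + 2 - 2*k) ≠ 0 := by
    have : (k:ℝ) ≤ t := by exact_mod_cast hkt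
    linarith
  rw [hq]
  rw [div_mul_div_comm]
  rw [div_eq_div_iff (by positivity) (by positivity)]
  push_cast
  rw [h2k] at hid ⊢
  linear_combination (-(2*(t:ℝ)+2-(k:ℝ))) * hid - 2 * (2:ℝ)^(k-1) * (∏ j ∈ range k, (2*(t:ℝ) + 1 - (j:ℝ))) * hB

lemma sum_j1 (k : ℕ) : ∑ j ∈ range k, ((j:ℝ)+1) = k*((k:ℝ)+1)/2 := by
  induction k with
  | zero => simp
  | succ k ih => rw [sum_range_succ, ih]; push_cast; ring

lemma prod_upper (t k : ℕ) (hkt : k ≤ t) :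
    ∏ j ∈ range k, ((2*(t:ℝ) - 2*j) / (2*(t:ℝ) + 1 - j))
      ≤ Real.exp (-(k*((k:ℝ)+1)/(2*(2*(t:ℝ)+1)))) := by
  have step : ∀ j ∈ range k, (2*(t:ℝ) - 2*j) / (2*(t:ℝ) + 1 - j)
      ≤ Real.exp (-((j:ℝ)+1)/(2*(t:ℝ)+1)) := by
    intro j hj
    simp only [mem_range] at hj
    have hj1 : (j:ℝ) + 1 ≤ k := by exact_mod_cast hj
    have hkr : (k:ℝ) ≤ t := by exact_mod_cast hkt
    have hd : (0:ℝ) < 2*(t:ℝ) + 1 - j := by linarith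
    have h1 : (2*(t:ℝ) - 2*j) / (2*(t:ℝ) + 1 - j) = 1 - ((j:ℝ)+1)/(2*(t:ℝ)+1-j) := by
      field_simp
      ring
    have h2 : (1:ℝ) - ((j:ℝ)+1)/(2*(t:ℝ)+1-j) ≤ Real.exp (-(((j:ℝ)+1)/(2*(t:ℝ)+1-j))) := by
      have := Real.add_one_le_exp (-(((j:ℝ)+1)/(2*(t:ℝ)+1-j)))
      linarith
    have h3 : Real.exp (-(((j:ℝ)+1)/(2*(t:ℝ)+1-j))) ≤ Real.exp (-((j:ℝ)+1)/(2*(t:ℝ)+1)) := by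
      apply Real.exp_le_exp.mpr
      rw [neg_div]
      apply neg_le_neg
      apply div_le_div_of_nonneg_left (by positivity) hd (by linarith)
    linarith
  calc ∏ j ∈ range k, ((2*(t:ℝ) - 2*j) / (2*(t:ℝ) + 1 - j))
      ≤ ∏ j ∈ range k, Real.exp (-((j:ℝ)+1)/(2*(t:ℝ)+1)) := by
        apply prod_le_prod _ step
        intro j hj
        simp only [mem_range] at hj
        have hj1 : (j:ℝ) + 1 ≤ k := by exact_mod_cast hj
        have hkr : (k:ℝ) ≤ t := by exact_mod_cast hkt
        apply div_nonneg <;> linarith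
    _ = Real.exp (∑ j ∈ range k, -((j:ℝ)+1)/(2*(t:ℝ)+1)) := by
        rw [Real.exp_sum]
    _ = Real.exp (-(k*((k:ℝ)+1)/(2*(2*(t:ℝ)+1)))) := by
        congr 1
        rw [show (fun j : ℕ => -((j:ℝ)+1)/(2*(t:ℝ)+1)) = fun j : ℕ => (-(1/(2*(t:ℝ)+1))) * ((j:ℝ)+1) from by funext j; ring]
        rw [← Finset.mul_sum, sum_j1]
        have hne : 2*(t:ℝ)+1 ≠ 0 := by positivity
        field_simp

lemma prod_lower (t k : ℕ) (hk2 : 2*k ≤ t) :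
    Real.exp (-(k*((k:ℝ)+1)/(4*((t:ℝ)+1-k))))
      ≤ ∏ j ∈ range k, ((2*(t:ℝ) - 2*j) / (2*(t:ℝ) + 1 - j)) := by
  have hkr : 2*(k:ℝ) ≤ t := by exact_mod_cast hk2
  have step : ∀ j ∈ range k, Real.exp (-(((j:ℝ)+1)/(2*((t:ℝ)+1-k))))
      ≤ (2*(t:ℝ) - 2*j) / (2*(t:ℝ) + 1 - j) := by
    intro j hj
    simp only [mem_range] at hj
    have hj1 : (j:ℝ) + 1 ≤ k := by exact_mod_cast hj
    have hd : (0:ℝ) < 2*(t:ℝ) - 2*j := by linarith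
    have hd2 : (0:ℝ) < 2*(t:ℝ) + 1 - j := by linarith
    have h1 : Real.exp (-(((j:ℝ)+1)/(2*(t:ℝ)-2*j))) ≤ (2*(t:ℝ) - 2*j) / (2*(t:ℝ) + 1 - j) := by
      have he := Real.add_one_le_exp (((j:ℝ)+1)/(2*(t:ℝ)-2*j))
      have he2 : (2*(t:ℝ)+1-j)/(2*(t:ℝ)-2*j) ≤ Real.exp (((j:ℝ)+1)/(2*(t:ℝ)-2*j)) := by
        have : (2*(t:ℝ)+1-j)/(2*(t:ℝ)-2*j) = ((j:ℝ)+1)/(2*(t:ℝ)-2*j) + 1 := by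
          rw [div_add_one hd.ne']; congr 1
          ring
        linarith
      rw [Real.exp_neg]
      rw [inv_le_comm₀ (Real.exp_pos _) (by positivity)]
      calc ((2*(t:ℝ) - 2*j) / (2*(t:ℝ) + 1 - j))⁻¹ = (2*(t:ℝ)+1-j)/(2*(t:ℝ)-2*j) := by
            rw [inv_div]
       _ ≤ Real.exp (((j:ℝ)+1)/(2*(t:ℝ)-2*j)) := he2
    refine le_trans (Real.exp_le_exp.mpr ?_) h1
    apply neg_le_neg
    apply div_le_div_of_nonneg_left (by positivity) (by linarith) (by linarith)
  calc Real.exp (-(k*((k:ℝ)+1)/(4*((t:ℝ)+1-k))))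
      = ∏ j ∈ range k, Real.exp (-(((j:ℝ)+1)/(2*((t:ℝ)+1-k)))) := by
        rw [← Real.exp_sum]
        congr 1
        rw [show (fun j : ℕ => -(((j:ℝ)+1)/(2*((t:ℝ)+1-k)))) = fun j : ℕ => (-(1/(2*((t:ℝ)+1-k)))) * ((j:ℝ)+1) from by funext j; ring]
        rw [← Finset.mul_sum, sum_j1]
        have hne : (t:ℝ)+1-(k:ℝ) ≠ 0 := by linarith
        field_simp
        ring
    _ ≤ ∏ j ∈ range k, ((2*(t:ℝ) - 2*j) / (2*(t:ℝ) + 1 - j)) := by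
        apply prod_le_prod _ step
        intro j hj
        positivity

theorem stmt_19 (c : ℝ) (hc : 0 < c) :
    Filter.Tendsto
      (fun t : ℕ => ((pFun (2 * t + 2) ⌊c * Real.sqrt (2 * t + 2)⌋₊ t : ℚ) : ℝ))
      Filter.atTop (nhds (Real.exp (-c ^ 2 / 2))) := by
  set s : ℕ → ℝ := fun t => Real.sqrt (2 * (t:ℝ) + 2) with hs
  set K : ℕ → ℕ := fun t => ⌊c * s t⌋₊ with hK
  have hs_pos : ∀ t : ℕ, 0 < s t := fun t => Real.sqrt_pos.mpr (by positivity)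
  have hs_mul : ∀ t : ℕ, s t * s t = 2 * (t:ℝ) + 2 := fun t =>
    Real.mul_self_sqrt (by positivity)
  have hs_tendsto : Tendsto s atTop atTop := by
    rw [tendsto_atTop]
    intro b
    filter_upwards [eventually_ge_atTop ⌈b^2⌉₊] with t ht
    have h1 : b ≤ Real.sqrt (b^2) := by
      rw [Real.sqrt_sq_eq_abs]; exact le_abs_self b
    refine le_trans h1 (Real.sqrt_le_sqrt ?_)
    have h2 : b^2 ≤ (⌈b^2⌉₊ : ℝ) := Nat.le_ceil _
    have h3 : ((⌈b^2⌉₊ : ℕ) : ℝ) ≤ (t : ℝ) := by exact_mod_cast ht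
    linarith
  have hKle : ∀ t : ℕ, (K t : ℝ) ≤ c * s t := fun t => Nat.floor_le (by positivity)
  have hKgt : ∀ t : ℕ, c * s t - 1 < K t := fun t => by
    have := Nat.lt_floor_add_one (c * s t); rw [hK]; simp only; linarith
  -- L2 : K/s → c
  have L2 : Tendsto (fun t => (K t : ℝ) / s t) atTop (nhds c) := by
    have hlow : Tendsto (fun t : ℕ => c - 1 / s t) atTop (nhds c) := by
      have := (tendsto_inv_atTop_zero).comp hs_tendsto
      have h2 := tendsto_const_nhds (x := c) (f := atTop (α := ℕ)) |>.sub this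
      simpa [one_div] using h2
    apply tendsto_of_tendsto_of_tendsto_of_le_of_le hlow tendsto_const_nhds
    · intro t
      show c - 1 / s t ≤ (K t : ℝ) / s t
      have heq : c - 1 / s t = (c * s t - 1) / s t := by
        field_simp [(hs_pos t).ne']
      rw [heq]
      gcongr
      exact (hKgt t).le
    · intro t
      rw [div_le_iff₀ (hs_pos t)]
      exact hKle t
  -- L2' : (K+1)/s → c
  have L2' : Tendsto (fun t => ((K t : ℝ) + 1) / s t) atTop (nhds c) := by
    have h1 := L2.add ((tendsto_inv_atTop_zero).comp hs_tendsto)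
    rw [add_zero] at h1
    apply h1.congr
    intro t
    simp only [Function.comp_apply]
    rw [add_div, one_div]
  have LA : Tendsto (fun t => (K t : ℝ) * ((K t : ℝ) + 1) / (2 * (t:ℝ) + 2))
      atTop (nhds (c ^ 2)) := by
    have h1 := L2.mul L2'
    rw [show c * c = c ^ 2 by ring] at h1
    apply h1.congr
    intro t
    rw [div_mul_div_comm, hs_mul t]
  have LB : Tendsto (fun t => (K t : ℝ) / ((t:ℝ) + 1)) atTop (nhds 0) := by
    have h2 : Tendsto (fun t : ℕ => 2 / s t) atTop (nhds 0) :=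
      tendsto_const_nhds.div_atTop hs_tendsto
    have h1 := L2.mul h2
    rw [mul_zero] at h1
    apply h1.congr
    intro t
    have h3 := hs_mul t
    have h4 := hs_pos t
    have h5 : s t ≠ 0 := ne_of_gt h4
    have h6 : (t:ℝ) + 1 ≠ 0 := by positivity
    field_simp
    nlinarith [h3]
  have LC : Tendsto (fun t : ℕ => ((t:ℝ) + 1) / (((t:ℝ) + 1) - (K t : ℝ))) atTop (nhds 1) := by
    have cont : Tendsto (fun x : ℝ => 1 / (1 - x)) (nhds 0) (nhds 1) := by
      have h : ContinuousAt (fun x : ℝ => 1 / (1 - x)) 0 :=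
        ContinuousAt.div continuousAt_const
          ((continuous_const.sub continuous_id).continuousAt) (by norm_num)
      simpa using h.tendsto
    have h1 := cont.comp LB
    apply h1.congr
    intro t
    simp only [Function.comp_apply]
    rw [show (1:ℝ) - (K t : ℝ) / ((t:ℝ) + 1) = (((t:ℝ) + 1) - (K t : ℝ)) / ((t:ℝ) + 1) from by
      field_simp]
    rw [one_div_div]
  have hev1 : ∀ᶠ t : ℕ in atTop, 1 ≤ K t := by
    have h1 : Tendsto (fun t : ℕ => c * s t) atTop atTop :=
      hs_tendsto.const_mul_atTop hc
    filter_upwards [h1.eventually_ge_atTop 1] with t ht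
    exact Nat.le_floor (by exact_mod_cast ht)
  have hev2 : ∀ᶠ t : ℕ in atTop, 2 * K t ≤ t := by
    have h1 := LB.eventually_lt_const (show (0:ℝ) < 1/4 by norm_num)
    filter_upwards [h1] with t ht
    have htp : (0:ℝ) < (t:ℝ) + 1 := by positivity
    rw [div_lt_iff₀ htp] at ht
    have h2 : (4 * K t : ℝ) < (t:ℝ) + 1 := by push_cast; linarith
    have h3 : 4 * K t < t + 1 := by exact_mod_cast h2
    omega
  have Llow : Tendsto (fun t => (K t:ℝ) * ((K t:ℝ) + 1) / (4 * ((t:ℝ) + 1 - (K t : ℝ))))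
      atTop (nhds (c^2/2)) := by
    have h1 := LA.mul (LC.div_const 2)
    rw [show c^2 * (1/2 : ℝ) = c^2/2 by ring] at h1
    apply h1.congr'
    filter_upwards [hev2] with t ht
    have hKt : (K t : ℝ) ≤ t := by exact_mod_cast (by omega : K t ≤ t)
    have h2 : ((t:ℝ) + 1) - (K t : ℝ) ≠ 0 := by linarith
    have h3 : (t:ℝ) + 1 ≠ 0 := by positivity
    field_simp
    ring
  have Lup : Tendsto (fun t => (K t:ℝ) * ((K t:ℝ) + 1) / (2 * (2 * (t:ℝ) + 1)))
      atTop (nhds (c^2/2)) := by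
    have hb2 : Tendsto (fun t : ℕ => 2 * (2 * (t:ℝ) + 1)) atTop atTop := by
      have h0 : Tendsto (fun t : ℕ => 4 * (t:ℝ) + 2) atTop atTop :=
        tendsto_atTop_add_const_right _ 2
          ((tendsto_natCast_atTop_atTop).const_mul_atTop (by norm_num))
      apply h0.congr
      intro t; ring
    have hhalf : Tendsto (fun t : ℕ => (2 * (t:ℝ) + 2) / (2 * (2 * (t:ℝ) + 1)))
        atTop (nhds (1/2)) := by
      have h0 := (tendsto_inv_atTop_zero).comp hb2
      have h1 := (tendsto_const_nhds (x := (1:ℝ)/2) (f := atTop (α := ℕ))).add h0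
      rw [add_zero] at h1
      apply h1.congr
      intro t
      simp only [Function.comp_apply]
      have h2 : 2 * (2 * (t:ℝ) + 1) ≠ 0 := by positivity
      rw [inv_eq_one_div]
      field_simp
      ring
    have h1 := LA.mul hhalf
    rw [show c^2 * (1/2 : ℝ) = c^2/2 by ring] at h1
    apply h1.congr
    intro t
    have h2 : 2 * (t:ℝ) + 2 ≠ 0 := by positivity
    have h3 : 2 * (2 * (t:ℝ) + 1) ≠ 0 := by positivity
    field_simp
  have hProd : Tendsto
      (fun t => ∏ j ∈ range (K t), ((2*(t:ℝ) - 2*j) / (2*(t:ℝ) + 1 - j)))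
      atTop (nhds (Real.exp (-(c^2/2)))) := by
    have hl : Tendsto
        (fun t => Real.exp (-((K t:ℝ) * ((K t:ℝ)+1) / (4*((t:ℝ)+1-(K t:ℝ))))))
        atTop (nhds (Real.exp (-(c^2/2)))) :=
      (Real.continuous_exp.tendsto _).comp Llow.neg
    have hu : Tendsto
        (fun t => Real.exp (-((K t:ℝ) * ((K t:ℝ)+1) / (2*(2*(t:ℝ)+1)))))
        atTop (nhds (Real.exp (-(c^2/2)))) :=
      (Real.continuous_exp.tendsto _).comp Lup.neg
    apply tendsto_of_tendsto_of_tendsto_of_le_of_le' hl hu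
    · filter_upwards [hev2] with t ht
      exact prod_lower t (K t) ht
    · filter_upwards [hev2] with t ht
      exact prod_upper t (K t) (by omega)
  have LD : Tendsto (fun t : ℕ => (2*(t:ℝ) + 2 - (K t:ℝ)) / (2*(t:ℝ) + 2 - 2*(K t:ℝ)))
      atTop (nhds 1) := by
    have hnum : Tendsto (fun t : ℕ => 1 - ((K t:ℝ)/((t:ℝ)+1))/2) atTop (nhds 1) := by
      have := tendsto_const_nhds (x := (1:ℝ)) (f := atTop (α := ℕ)) |>.sub (LB.div_const 2)
      simpa using this
    have hden : Tendsto (fun t : ℕ => 1 - (K t:ℝ)/((t:ℝ)+1)) atTop (nhds 1) := by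
      have := tendsto_const_nhds (x := (1:ℝ)) (f := atTop (α := ℕ)) |>.sub LB
      simpa using this
    have h1 := hnum.div hden one_ne_zero
    rw [div_one] at h1
    apply h1.congr'
    filter_upwards [hev2] with t ht
    have hKt : (K t : ℝ) ≤ t := by exact_mod_cast (by omega : K t ≤ t)
    have h3 : (0:ℝ) < (t:ℝ) + 1 := by positivity
    have h4 : 1 - (K t:ℝ)/((t:ℝ)+1) ≠ 0 := by
      have h5 : (K t:ℝ)/((t:ℝ)+1) < 1 := by
        rw [div_lt_one (by positivity)]; linarith
      linarith
    have h6 : 2*(t:ℝ) + 2 - 2*(K t:ℝ) ≠ 0 := by linarith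
    simp only [Pi.div_apply]
    rw [div_eq_div_iff h4 h6]
    field_simp
  have hfinal := hProd.mul LD
  rw [mul_one] at hfinal
  rw [show Real.exp (-(c^2/2)) = Real.exp (-c^2/2) from by rw [neg_div]] at hfinal
  apply hfinal.congr'
  filter_upwards [hev1, hev2] with t ht1 ht2
  have hkt : K t ≤ t := by omega
  rw [← recast t (K t) ht1 hkt]
  rw [pFun_eq t (K t) ht1]
  push_cast
  ring
end
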